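/- A permutation π of length n ≥ 1 avoids the mesh pattern (12, {(0,1),(1,1),(2,0),(2,2)}) if and only if π(n) = 1, i.e. π ends with 1. Therefore the number of permutations of length n avoiding this pattern is (n−1)!. -/

import Mathlib

/-- 1-based position boundaries of an occurrence: `posOf x 0 = 0`,
`posOf x i = x_i` (1-based) for `1 ≤ i ≤ k`, and `posOf x i = n+1` for `i > k`. -/
def posOf {k n : ℕ} (x : Fin k → Fin n) (i : ℕ) : ℕ :=
  if h : 1 ≤ i ∧ i ≤ k then (x ⟨i - 1, by omega⟩ : ℕ) + 1
  else if i = 0 then 0 else n + 1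

/-- 1-based value boundaries of an occurrence: `valOf τ x π 0 = 0`,
`valOf τ x π j = y_j`, the `j`-th smallest of the values `π(x_1),…,π(x_k)`
(which equals `π(x_{τ⁻¹(j)})` for an occurrence of the classical pattern `τ`),
and `n+1` for `j > k`. -/
def valOf {k n : ℕ} (τ : Equiv.Perm (Fin k)) (x : Fin k → Fin n)
    (π : Equiv.Perm (Fin n)) (j : ℕ) : ℕ :=
  if h : 1 ≤ j ∧ j ≤ k then (π (x (τ.symm ⟨j - 1, by omega⟩)) : ℕ) + 1
  else if j = 0 then 0 else n + 1

/-- `π` (a permutation of length `n`, 0-indexed via `Fin n`) contains the mesh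
pattern `(τ, R)`, where boxes in `R` are given with 0-based coordinates in `[0,k]²`.
All positions/values are converted to 1-based via `+1`. -/
def MeshOccursIn {k n : ℕ} (τ : Equiv.Perm (Fin k)) (R : Set (ℕ × ℕ))
    (π : Equiv.Perm (Fin n)) : Prop :=
  ∃ x : Fin k → Fin n, StrictMono x ∧
    (∀ a b : Fin k, π (x a) < π (x b) ↔ τ a < τ b) ∧
    ∀ r ∈ R, ∀ z : Fin n,
      ¬ (posOf x r.1 < (z : ℕ) + 1 ∧ (z : ℕ) + 1 < posOf x (r.1 + 1) ∧
         valOf τ x π r.2 < (π z : ℕ) + 1 ∧ (π z : ℕ) + 1 < valOf τ x π (r.2 + 1))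

/-- `π` avoids the mesh pattern `(τ, R)`. -/
def MeshAvoids {k n : ℕ} (τ : Equiv.Perm (Fin k)) (R : Set (ℕ × ℕ))
    (π : Equiv.Perm (Fin n)) : Prop := ¬ MeshOccursIn τ R π

-- helper computation lemmas (all `rfl`)
lemma pos0 {n : ℕ} (x : Fin 2 → Fin n) : posOf x 0 = 0 := rfl
lemma pos1 {n : ℕ} (x : Fin 2 → Fin n) : posOf x 1 = (x 0 : ℕ) + 1 := rfl
lemma pos2 {n : ℕ} (x : Fin 2 → Fin n) : posOf x 2 = (x 1 : ℕ) + 1 := rfl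
lemma pos3 {n : ℕ} (x : Fin 2 → Fin n) : posOf x 3 = n + 1 := rfl
lemma val0 {n : ℕ} (x : Fin 2 → Fin n) (π : Equiv.Perm (Fin n)) : valOf 1 x π 0 = 0 := rfl
lemma val1 {n : ℕ} (x : Fin 2 → Fin n) (π : Equiv.Perm (Fin n)) :
    valOf 1 x π 1 = (π (x 0) : ℕ) + 1 := rfl
lemma val2 {n : ℕ} (x : Fin 2 → Fin n) (π : Equiv.Perm (Fin n)) :
    valOf 1 x π 2 = (π (x 1) : ℕ) + 1 := rfl
lemma val3 {n : ℕ} (x : Fin 2 → Fin n) (π : Equiv.Perm (Fin n)) : valOf 1 x π 3 = n + 1 := rfl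


set_option maxHeartbeats 1000000 in
/-- A permutation of length `n ≥ 1` avoids `(12, {(0,1),(1,1),(2,0),(2,2)})` iff it ends with `1`; hence `(n-1)!` avoiders. -/
theorem stmt3 (n : ℕ) (hn : 1 ≤ n) :
    (∀ π : Equiv.Perm (Fin n),
      MeshAvoids (1 : Equiv.Perm (Fin 2)) {(0,1),(1,1),(2,0),(2,2)} π ↔ π ⟨n - 1, by omega⟩ = ⟨0, by omega⟩) ∧
    Nat.card {π : Equiv.Perm (Fin n) //
      MeshAvoids (1 : Equiv.Perm (Fin 2)) {(0,1),(1,1),(2,0),(2,2)} π} = (n - 1).factorial := by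
  obtain ⟨m, rfl⟩ : ∃ m, n = m + 1 := ⟨n - 1, by omega⟩
  have hzero : (⟨0, by omega⟩ : Fin (m+1)) = 0 := by
    apply Fin.ext; simp
  have hlastm : (⟨m + 1 - 1, by omega⟩ : Fin (m+1)) = Fin.last m := by
    apply Fin.ext; simp
  simp only [hzero, hlastm]
  have hkey : ∀ π : Equiv.Perm (Fin (m + 1)),
      MeshAvoids (1 : Equiv.Perm (Fin 2)) {(0,1),(1,1),(2,0),(2,2)} π ↔
        π (Fin.last m) = 0 := by
    intro π
    constructor
    · -- avoids → last value is 0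
      intro hav
      by_contra hne
      apply hav
      have hv2 : (π (Fin.last m) : ℕ) ≠ 0 := by
        intro h
        exact hne (Fin.ext (by simpa using h))
      set v2 : Fin (m + 1) := π (Fin.last m) with hv2def
      have hv2pos : 1 ≤ (v2 : ℕ) := Nat.one_le_iff_ne_zero.mpr hv2
      set v1 : Fin (m + 1) := ⟨(v2 : ℕ) - 1, by omega⟩ with hv1def
      set x0 : Fin (m + 1) := π.symm v1 with hx0def
      have hπx0 : π x0 = v1 := π.apply_symm_apply v1
      have hx0lt : (x0 : ℕ) < m := by
        have h1 := x0.isLt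
        have h2 : (x0 : ℕ) ≠ m := by
          intro h
          have : π x0 = v2 := by rw [show x0 = Fin.last m from Fin.ext h]
          rw [hπx0] at this
          have := congrArg Fin.val this
          simp [hv1def] at this
          omega
        omega
      set x : Fin 2 → Fin (m + 1) := ![x0, Fin.last m] with hxdef
      have hx1v : (x 1 : ℕ) = m := rfl
      have hval1 : (π (x 0) : ℕ) = (v2 : ℕ) - 1 := by
        show (π x0 : ℕ) = _
        rw [hπx0]
      have hval2 : (π (x 1) : ℕ) = (v2 : ℕ) := rfl
      have hπlt : π (x 0) < π (x 1) := Fin.lt_def.mpr (by rw [hval1, hval2]; omega)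
      have hxlt : x 0 < x 1 := by
        rw [show x 0 = x0 from rfl, show x 1 = Fin.last m from rfl]
        exact Fin.lt_def.mpr (by simpa using hx0lt)
      refine ⟨x, ?_, ?_, ?_⟩
      · intro a b hab
        fin_cases a <;> fin_cases b <;>
          first
          | exact absurd hab (by decide)
          | exact hxlt
      · intro a b
        fin_cases a <;> fin_cases b <;>
          simp [hπlt, hπlt.asymm, Equiv.Perm.coe_one]
      · rintro r hr z
        have hzlt := z.isLt
        simp only [Set.mem_insert_iff, Set.mem_singleton_iff] at hr
        rcases hr with rfl | rfl | rfl | rfl <;>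
          simp only [show (0:ℕ)+1 = 1 from rfl, show (1:ℕ)+1 = 2 from rfl,
            show (2:ℕ)+1 = 3 from rfl,
            pos0, pos1, pos2, pos3, val0, val1, val2, val3, hval1, hval2, hx1v] <;>
          omega
    · -- last value 0 → avoids
      intro hlast
      rintro ⟨x, hmono, hval, hbox⟩
      have h01 : π (x 0) < π (x 1) := by
        rw [hval]
        exact Fin.lt_def.mpr (by norm_num)
      have hx01 : x 0 < x 1 := hmono (Fin.lt_def.mpr (by norm_num))
      have hx1ne : (x 1 : ℕ) ≠ m := by
        intro h
        have hx1 : x 1 = Fin.last m := Fin.ext h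
        rw [hx1, hlast] at h01
        exact absurd h01 (by simp [Fin.lt_def])
      have hx0ne : (π (x 0) : ℕ) ≠ 0 := by
        intro h
        have hx0 : x 0 = Fin.last m := by
          apply π.injective
          rw [hlast]
          exact Fin.ext (by simpa using h)
        have h1 := congrArg Fin.val hx0
        have h2 := Fin.lt_def.mp hx01
        have h3 := (x 1).isLt
        simp at h1
        omega
      have hb := hbox (2, 0) (by simp) (Fin.last m)
      simp only [show ((2,0) : ℕ × ℕ).1 = 2 from rfl, show ((2,0) : ℕ × ℕ).2 = 0 from rfl,
        show (2:ℕ)+1 = 3 from rfl, show (0:ℕ)+1 = 1 from rfl,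
        pos2, pos3, val0, val1, hlast] at hb
      apply hb
      have h3 := (x 1).isLt
      refine ⟨by simp; omega, by simp, by simp, by
        have hc : (π (Fin.last m) : ℕ) = 0 := by simp [hlast]
        simp; omega⟩
  refine ⟨hkey, ?_⟩
  -- counting
  have e0 : {π : Equiv.Perm (Fin (m+1)) //
      MeshAvoids (1 : Equiv.Perm (Fin 2)) {(0,1),(1,1),(2,0),(2,2)} π} ≃
      {π : Equiv.Perm (Fin (m+1)) // π (Fin.last m) = 0} :=
    Equiv.subtypeEquivRight hkey
  have e1 : {π : Equiv.Perm (Fin (m+1)) // π (Fin.last m) = 0} ≃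
      {π : Equiv.Perm (Fin (m+1)) // π 0 = 0} :=
    { toFun := fun p => ⟨p.1 * Equiv.swap 0 (Fin.last m), by
        simp [Equiv.Perm.mul_apply, Equiv.swap_apply_left, p.2]⟩
      invFun := fun p => ⟨p.1 * Equiv.swap 0 (Fin.last m), by
        simp [Equiv.Perm.mul_apply, Equiv.swap_apply_right, p.2]⟩
      left_inv := fun p => by
        ext1; simp [mul_assoc]
      right_inv := fun p => by
        ext1; simp [mul_assoc] }
  have e2 : {π : Equiv.Perm (Fin (m+1)) // π 0 = 0} ≃ Equiv.Perm (Fin m) :=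
    { toFun := fun p => (Equiv.Perm.decomposeFin p.1).2
      invFun := fun σ => ⟨Equiv.Perm.decomposeFin.symm (0, σ), by
        simp [Equiv.Perm.decomposeFin_symm_apply_zero]⟩
      left_inv := fun p => by
        have hfst : (Equiv.Perm.decomposeFin p.1).1 = 0 := by
          have h0 := Equiv.Perm.decomposeFin_symm_apply_zero
            (Equiv.Perm.decomposeFin (p : Equiv.Perm (Fin (m+1)))).1
            (Equiv.Perm.decomposeFin (p : Equiv.Perm (Fin (m+1)))).2
          rw [Prod.mk.eta, Equiv.symm_apply_apply] at h0
          rw [← h0, p.2]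
        ext1
        show Equiv.Perm.decomposeFin.symm
          (0, (Equiv.Perm.decomposeFin (p : Equiv.Perm (Fin (m+1)))).2) = _
        rw [show ((0 : Fin (m+1)), (Equiv.Perm.decomposeFin (p : Equiv.Perm (Fin (m+1)))).2)
            = Equiv.Perm.decomposeFin (p : Equiv.Perm (Fin (m+1))) from by
          conv_rhs => rw [← Prod.mk.eta
            (p := Equiv.Perm.decomposeFin (p : Equiv.Perm (Fin (m+1))))]
          rw [hfst]]
        exact Equiv.symm_apply_apply _ _
      right_inv := fun σ => by simp }
  rw [Nat.card_congr ((e0.trans e1).trans e2), Nat.card_eq_fintype_card,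
    Fintype.card_perm, Fintype.card_fin]
  simp
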